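/- Let n be a positive integer and alpha > 0 satisfy alpha * 2^{-n} * C(n,i) <= 1 for all i in {0,...,n}. Let P be the product distribution on {0,1}^{n+1} in which bit i (for i in {0,...,n}) equals 1 independently with probability S_e(i). Then the sum over all x in {0,1}^{n+1} of sqrt(P(x)) is at most e^{ sqrt(alpha) * (2*pi*n)^{1/4} }. By symmetry the same bound holds with S_e replaced by S_o. -/

import Mathlib

open Finset Real

/-- The binomial probability `bin n p k = C(n,k) p^k (1-p)^(n-k)` (here `C(n,k) = 0`
for `k > n`, so the value is `0` out of range). -/
noncomputable def bin (n : ℕ) (p : ℝ) (k : ℕ) : ℝ :=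
  (n.choose k : ℝ) * p^k * (1-p)^(n-k)

/-- The length-`(n+1)` string of probabilities `S_e`, nonzero on even indices:
`S_e(i) = α bin(n,1/2,i)` for even `i`, and `0` for odd `i`. -/
noncomputable def Se (n : ℕ) (α : ℝ) : Fin (n+1) → ℝ :=
  fun i => if Even i.val then α * bin n (1/2) i.val else 0

/-- The length-`(n+1)` string of probabilities `S_o`, nonzero on odd indices:
`S_o(i) = α bin(n,1/2,i)` for odd `i`, and `0` for even `i`. -/
noncomputable def So (n : ℕ) (α : ℝ) : Fin (n+1) → ℝ :=
  fun i => if Even i.val then 0 else α * bin n (1/2) i.val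

/-- The probability assigned to the binary string `x : Fin m → Bool` by the product
distribution in which bit `i` equals `1` independently with probability `S i`. -/
noncomputable def prodP {m : ℕ} (S : Fin m → ℝ) (x : Fin m → Bool) : ℝ :=
  ∏ i, if x i then S i else 1 - S i

lemma cb_sq (m : ℕ) : (2*m+1) * Nat.centralBinom m ^ 2 ≤ 16 ^ m := by
  induction m with
  | zero => simp [Nat.centralBinom]
  | succ m ih =>
    have h := Nat.succ_mul_centralBinom_succ m
    have key : (m+1)^2 * ((2*(m+1)+1) * Nat.centralBinom (m+1) ^ 2)
        ≤ (m+1)^2 * 16^(m+1) := by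
      calc (m+1)^2 * ((2*(m+1)+1) * Nat.centralBinom (m+1) ^ 2)
          = (2*m+3) * ((m+1) * Nat.centralBinom (m+1))^2 := by ring
        _ = (2*m+3) * (2*(2*m+1) * Nat.centralBinom m)^2 := by rw [h]
        _ = 4*(2*m+1)*(2*m+3) * ((2*m+1) * Nat.centralBinom m ^2) := by ring
        _ ≤ 4*(2*m+1)*(2*m+3) * 16^m := Nat.mul_le_mul_left _ ih
        _ ≤ (16*(m+1)^2) * 16^m := Nat.mul_le_mul_right _ (by nlinarith)
        _ = (m+1)^2 * 16^(m+1) := by ring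
    exact Nat.le_of_mul_le_mul_left key (by positivity)

lemma choose_half_sq (n : ℕ) (hn : 0 < n) : n * (n.choose (n/2))^2 ≤ 4 ^ n := by
  rcases Nat.even_or_odd n with ⟨m, hm⟩ | ⟨m, hm⟩
  · subst hm
    have h := cb_sq m
    have h1 : (m+m)/2 = m := by omega
    rw [h1]
    have h2 : Nat.choose (m+m) m = Nat.centralBinom m := by
      rw [Nat.centralBinom]; congr 1; omega
    rw [h2]
    calc (m+m) * Nat.centralBinom m ^2 ≤ (2*m+1) * Nat.centralBinom m ^2 :=
          Nat.mul_le_mul_right _ (by omega)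
      _ ≤ 16^m := h
      _ = 4^(m+m) := by rw [show m+m = 2*m by omega, pow_mul]; norm_num
  · subst hm
    have h := cb_sq m
    have hdiv : (2*m+1)/2 = m := by omega
    rw [hdiv]
    have hsymm : (2*m+1).choose (m+1) = (2*m+1).choose m := by
      have := Nat.choose_symm (show m ≤ 2*m+1 by omega)
      rwa [show 2*m+1-m = m+1 by omega] at this
    have hid : (m+1) * ((2*m+1).choose (m+1)) = (2*m+1) * Nat.centralBinom m := by
      have h0 := Nat.add_one_mul_choose_eq (2*m) m
      rw [Nat.centralBinom, mul_comm]
      exact h0.symm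
    have hid2 : (m+1) * ((2*m+1).choose m) = (2*m+1) * Nat.centralBinom m := by
      rw [← hsymm]; exact hid
    -- goal: (2m+1) * C(2m+1,m)^2 ≤ 4^(2m+1)
    have key : (m+1)^2 * ((2*m+1) * ((2*m+1).choose m)^2)
        ≤ (m+1)^2 * 4^(2*m+1) := by
      calc (m+1)^2 * ((2*m+1) * ((2*m+1).choose m)^2)
          = (2*m+1) * ((m+1) * ((2*m+1).choose m))^2 := by ring
        _ = (2*m+1) * ((2*m+1) * Nat.centralBinom m)^2 := by rw [hid2]
        _ = (2*m+1)^2 * ((2*m+1) * Nat.centralBinom m ^2) := by ring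
        _ ≤ (2*m+1)^2 * 16^m := Nat.mul_le_mul_left _ h
        _ ≤ (4*(m+1)^2) * 16^m := Nat.mul_le_mul_right _ (by nlinarith)
        _ = (m+1)^2 * (4 * 16^m) := by ring
        _ = (m+1)^2 * 4^(2*m+1) := by
            congr 1
            rw [pow_succ, pow_mul]
            norm_num; ring
    exact Nat.le_of_mul_le_mul_left key (by positivity)

lemma choose_le_exp_half (n : ℕ) (hn : 0 < n) :
    ∀ i, n/2 ≤ i → i ≤ n →
      (n.choose i : ℝ) ≤ (n.choose (n/2) : ℝ) *
        Real.exp ((1 - ((2*i : ℝ) - n)^2) / (4*n)) := by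
  have hnR : (0:ℝ) < n := by exact_mod_cast hn
  intro i hi
  induction i, hi using Nat.le_induction with
  | base =>
    intro _
    have h1 : ((2*(n/2 : ℕ) : ℝ) - n)^2 ≤ 1 := by
      obtain ⟨m, hm⟩ : ∃ m, n/2 = m := ⟨_, rfl⟩
      have h' : n = 2*m ∨ n = 2*m + 1 := by omega
      rw [hm]
      rcases h' with h | h <;> subst h <;> push_cast <;> nlinarith [sq_nonneg ((m:ℝ))]
    have hE : (0:ℝ) ≤ (1 - ((2*(n/2:ℕ):ℝ) - n)^2)/(4*n) :=
      div_nonneg (by linarith) (by positivity)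
    have hexp1 : (1:ℝ) ≤ Real.exp ((1 - ((2*(n/2:ℕ):ℝ) - n)^2)/(4*n)) := by
      nth_rewrite 1 [← Real.exp_zero]; exact Real.exp_le_exp.mpr hE
    exact le_mul_of_one_le_right (by positivity) hexp1
  | succ i hi2 ih =>
    intro hi1
    push_cast
    have ihh := ih (by omega)
    have hcast : ((n - i : ℕ) : ℝ) = (n:ℝ) - i := by
      push_cast [Nat.cast_sub (by omega : i ≤ n)]; ring
    have hrec : ((n.choose (i+1)) : ℝ) * (i+1) = (n.choose i : ℝ) * ((n:ℝ) - i) := by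
      have := Nat.choose_succ_right_eq n i
      have := congrArg (Nat.cast : ℕ → ℝ) this
      push_cast at this
      rw [this, hcast]
    have hip : (0:ℝ) < (i:ℝ) + 1 := by positivity
    have heq : (n.choose (i+1) : ℝ) = (n.choose i : ℝ) * (((n:ℝ) - i)/(i+1)) := by
      field_simp at hrec ⊢
      linarith [hrec]
    -- ratio bound
    have h2i : (n:ℝ) ≤ 2*i + 1 := by
      have : n ≤ 2*i+1 := by omega
      exact_mod_cast this
    have hin : (i:ℝ) + 1 ≤ n := by exact_mod_cast hi1
    have hratio : ((n:ℝ) - i)/(i+1) ≤ Real.exp (-((2*(i:ℝ)+1-n)/n)) := by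
      have hexp : 1 - ((2*(i:ℝ)+1-n)/n) ≤ Real.exp (-((2*(i:ℝ)+1-n)/n)) := by
        have := Real.add_one_le_exp (-((2*(i:ℝ)+1-n)/n))
        linarith
      have hlin : ((n:ℝ) - i)/(i+1) ≤ 1 - ((2*(i:ℝ)+1-n)/n) := by
        rw [div_le_iff₀ hip]
        have key : (0:ℝ) ≤ ((n:ℝ)-i-1)*((2*i+1-n)) := by
          apply mul_nonneg <;> linarith
        have h1n : (1 - (2*(i:ℝ)+1-n)/n) = (2*((n:ℝ)-i)-1)/n := by
          field_simp; ring
        rw [h1n, div_mul_eq_mul_div, le_div_iff₀ hnR]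
        nlinarith
      linarith
    calc (n.choose (i+1) : ℝ) = (n.choose i : ℝ) * (((n:ℝ) - i)/(i+1)) := heq
      _ ≤ ((n.choose (n/2) : ℝ) * Real.exp ((1 - ((2*i : ℝ) - n)^2) / (4*n)))
            * Real.exp (-((2*(i:ℝ)+1-n)/n)) := by
          apply mul_le_mul ihh hratio (by apply div_nonneg <;> linarith) (by positivity)
      _ = (n.choose (n/2) : ℝ) * Real.exp ((1 - ((2*((i:ℝ)+1)) - n)^2) / (4*n)) := by
          rw [mul_assoc, ← Real.exp_add]
          congr 2
          field_simp
          ring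

lemma choose_le_exp (n : ℕ) (hn : 0 < n) (i : ℕ) (hi : i ≤ n) :
    (n.choose i : ℝ) ≤ (n.choose (n/2) : ℝ) *
        Real.exp ((1 - ((2*i : ℝ) - n)^2) / (4*n)) := by
  rcases le_or_gt (n/2) i with h | h
  · exact choose_le_exp_half n hn i h hi
  · have hsymm : n.choose i = n.choose (n - i) := by
      rw [Nat.choose_symm hi]
    have h1 : n/2 ≤ n - i := by omega
    have h2 : n - i ≤ n := by omega
    have := choose_le_exp_half n hn (n-i) h1 h2
    rw [hsymm]
    convert this using 4
    have hcast : ((n - i : ℕ) : ℝ) = (n:ℝ) - i := by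
      push_cast [Nat.cast_sub (by omega : i ≤ n)]; ring
    rw [hcast]; ring

lemma gauss_partial (n : ℕ) (hn : 0 < n) (L : ℕ) :
    ∑ j ∈ range L, Real.exp (-(2/(n:ℝ)) * (j:ℝ)^2) ≤ 1 + Real.sqrt (π*n/2)/2 := by
  have hnR : (0:ℝ) < n := by exact_mod_cast hn
  have hb : (0:ℝ) < 2/(n:ℝ) := by positivity
  have hsqrt : Real.sqrt (π/(2/(n:ℝ))) = Real.sqrt (π*n/2) := by
    congr 1; field_simp
  cases L with
  | zero => simp; positivity
  | succ L =>
    rw [Finset.sum_range_succ']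
    have h0 : Real.exp (-(2/(n:ℝ)) * ((0:ℕ):ℝ)^2) = 1 := by norm_num
    rw [h0]
    have hanti : AntitoneOn (fun x : ℝ => Real.exp (-(2/(n:ℝ)) * x^2)) (Set.Icc 0 (0 + (L:ℝ))) := by
      intro x hx y hy hxy
      simp only
      apply Real.exp_le_exp.mpr
      have hx0 : 0 ≤ x := hx.1
      have h2 : x^2 ≤ y^2 := by nlinarith
      rw [neg_mul, neg_mul, neg_le_neg_iff]
      exact mul_le_mul_of_nonneg_left h2 hb.le
    have hint := hanti.sum_le_integral
    simp only [zero_add] at hint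
    have hIoi : ∫ x in Set.Ioi (0:ℝ), Real.exp (-(2/(n:ℝ)) * x^2) = Real.sqrt (π/(2/(n:ℝ)))/2 :=
      integral_gaussian_Ioi _
    have hintle : ∫ x in (0:ℝ)..(L:ℝ), Real.exp (-(2/(n:ℝ)) * x^2)
        ≤ ∫ x in Set.Ioi (0:ℝ), Real.exp (-(2/(n:ℝ)) * x^2) := by
      rw [intervalIntegral.integral_of_le (by positivity)]
      apply MeasureTheory.setIntegral_mono_set
      · exact (integrableOn_Ioi_exp_neg_mul_sq_iff.mpr hb)
      · filter_upwards with x using le_of_lt (Real.exp_pos _)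
      · filter_upwards with x
        intro hx
        exact hx.1
    have hsum : ∑ j ∈ range L, Real.exp (-(2/(n:ℝ)) * ((j+1:ℕ):ℝ)^2) ≤ Real.sqrt (π*↑n/2)/2 := by
      refine hint.trans (hintle.trans ?_)
      rw [hIoi, hsqrt]
    linarith

lemma gauss_left (n : ℕ) (hn : 0 < n) (m : ℝ) (k₀ : ℕ) (hm : (k₀:ℝ) - 1 ≤ m) :
    ∑ k ∈ range k₀, Real.exp (-(2/(n:ℝ)) * ((k:ℝ) - m)^2)
      ≤ 1 + Real.sqrt (π*n/2)/2 := by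
  rw [← Finset.sum_range_reflect]
  refine le_trans (Finset.sum_le_sum ?_) (gauss_partial n hn k₀)
  intro j hj
  rw [Finset.mem_range] at hj
  apply Real.exp_le_exp.mpr
  have hc : ((k₀ - 1 - j : ℕ) : ℝ) = (k₀:ℝ) - 1 - j := by
    have : k₀ - 1 - j = k₀ - (1 + j) := by omega
    rw [this, Nat.cast_sub (by omega)]
    push_cast; ring
  rw [hc, neg_mul, neg_mul, neg_le_neg_iff]
  apply mul_le_mul_of_nonneg_left _ (by positivity)
  have h1 : m - ((k₀:ℝ) - 1 - j) ≥ j := by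
    have : (j:ℝ) + 1 ≤ k₀ := by exact_mod_cast hj
    linarith
  nlinarith [Nat.cast_nonneg (α := ℝ) j]

lemma gauss_right (n : ℕ) (hn : 0 < n) (m : ℝ) (k₀ L : ℕ) (hm : m ≤ (k₀:ℝ)) :
    ∑ i ∈ range L, Real.exp (-(2/(n:ℝ)) * (((k₀ + i : ℕ):ℝ) - m)^2)
      ≤ 1 + Real.sqrt (π*n/2)/2 := by
  refine le_trans (Finset.sum_le_sum ?_) (gauss_partial n hn L)
  intro i _
  apply Real.exp_le_exp.mpr
  rw [neg_mul, neg_mul, neg_le_neg_iff]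
  apply mul_le_mul_of_nonneg_left _ (by positivity)
  have h1 : ((k₀ + i : ℕ):ℝ) - m ≥ i := by push_cast; linarith
  nlinarith [Nat.cast_nonneg (α := ℝ) i]

lemma gauss_shift (n : ℕ) (hn : 0 < n) (m : ℝ) (K : ℕ) :
    ∑ k ∈ range K, Real.exp (-(2/(n:ℝ)) * ((k:ℝ) - m)^2)
      ≤ 2 + Real.sqrt (π*n/2) := by
  have hceil : m ≤ (⌈m⌉₊ : ℝ) := Nat.le_ceil m
  have hone : (1:ℕ) ≤ ⌈m⌉₊ → (⌈m⌉₊ : ℝ) - 1 ≤ m := by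
    intro h
    have hm0 : 0 < m := Nat.one_le_ceil_iff.mp h
    have := Nat.ceil_lt_add_one (le_of_lt hm0) (R := ℝ) (a := m)
    linarith
  rcases le_or_gt (⌈m⌉₊) K with hc | hc
  · have hsplit : ∑ k ∈ range K, Real.exp (-(2/(n:ℝ)) * ((k:ℝ) - m)^2)
        = (∑ k ∈ range ⌈m⌉₊, Real.exp (-(2/(n:ℝ)) * ((k:ℝ) - m)^2))
          + ∑ i ∈ range (K - ⌈m⌉₊), Real.exp (-(2/(n:ℝ)) * (((⌈m⌉₊ + i : ℕ):ℝ) - m)^2) := by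
      rw [← Finset.sum_range_add_sum_Ico _ hc, Finset.sum_Ico_eq_sum_range]
    rw [hsplit]
    have hleft : (⌈m⌉₊:ℝ) - 1 ≤ m ∨ ⌈m⌉₊ = 0 := by
      rcases Nat.eq_zero_or_pos ⌈m⌉₊ with h | h
      · right; exact h
      · left; exact hone h
    have hL : ∑ k ∈ range ⌈m⌉₊, Real.exp (-(2/(n:ℝ)) * ((k:ℝ) - m)^2)
        ≤ 1 + Real.sqrt (π*n/2)/2 := by
      rcases hleft with h | h
      · exact gauss_left n hn m _ h
      · rw [h]; simp; positivity
    have hR := gauss_right n hn m ⌈m⌉₊ (K - ⌈m⌉₊) hceil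
    linarith
  · have hall : ∑ k ∈ range K, Real.exp (-(2/(n:ℝ)) * ((k:ℝ) - m)^2)
        ≤ 1 + Real.sqrt (π*n/2)/2 := by
      apply gauss_left n hn m K
      have h1 : (1:ℕ) ≤ ⌈m⌉₊ := by omega
      have := hone h1
      have : (K:ℝ) ≤ (⌈m⌉₊:ℝ) - 1 := by
        have : K + 1 ≤ ⌈m⌉₊ := by omega
        have := (Nat.cast_le (α := ℝ)).mpr this
        push_cast at this
        linarith
      linarith [hone h1]
    have : (0:ℝ) ≤ Real.sqrt (π*n/2)/2 := by positivity
    linarith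

lemma bin_nonneg (n k : ℕ) : 0 ≤ bin n (1/2) k := by
  unfold bin; positivity

lemma bin_eq (n i : ℕ) (hi : i ≤ n) : bin n (1/2) i = (n.choose i : ℝ) / 2^n := by
  unfold bin
  rw [show (1 - 1/2 : ℝ) = 1/2 by norm_num, mul_assoc, ← pow_add,
    show i + (n - i) = n by omega]
  rw [div_pow, one_pow]
  ring

lemma filter_parity_eq (n r : ℕ) (hr : r < 2) (hn : 0 < n) :
    (Finset.range (n+1)).filter (fun i => i % 2 = r)
      = (Finset.range ((n - r)/2 + 1)).image (fun k => 2*k + r) := by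
  ext i
  simp only [Finset.mem_filter, Finset.mem_image, Finset.mem_range]
  constructor
  · rintro ⟨h1, h2⟩
    exact ⟨i/2, by omega, by omega⟩
  · rintro ⟨k, hk, rfl⟩
    omega

lemma parity_choose_sum (n : ℕ) (hn : 0 < n) (r : ℕ) (hr : r < 2) :
    ∑ i ∈ (Finset.range (n+1)).filter (fun i => i % 2 = r), (n.choose i : ℝ)
      = 2^n / 2 := by
  have halt : ∑ i ∈ Finset.range (n+1), ((-1:ℝ))^i * (n.choose i) = 0 := by
    have h := Int.alternating_sum_range_choose (n := n)
    rw [if_neg (by omega)] at h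
    have := congrArg (Int.cast : ℤ → ℝ) h
    push_cast at this
    convert this using 2
  have htot : ∑ i ∈ Finset.range (n+1), ((n.choose i : ℝ)) = 2^n := by
    have := congrArg (Nat.cast : ℕ → ℝ) (Nat.sum_range_choose n)
    push_cast at this
    exact this
  set E := ∑ i ∈ (Finset.range (n+1)).filter (fun i => i % 2 = 0), (n.choose i : ℝ) with hE
  set O := ∑ i ∈ (Finset.range (n+1)).filter (fun i => ¬ (i % 2 = 0)), (n.choose i : ℝ) with hO
  have hEO : E + O = 2^n := by
    rw [hE, hO, Finset.sum_filter_add_sum_filter_not, htot]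
  have h1 : ∑ i ∈ (Finset.range (n+1)).filter (fun i => i % 2 = 0),
      ((-1:ℝ))^i * (n.choose i) = E := by
    apply Finset.sum_congr rfl
    intro i hi
    rw [Finset.mem_filter] at hi
    rw [(Nat.even_iff.mpr hi.2).neg_one_pow, one_mul]
  have h2 : ∑ i ∈ (Finset.range (n+1)).filter (fun i => ¬ (i % 2 = 0)),
      ((-1:ℝ))^i * (n.choose i) = -O := by
    rw [hO, ← Finset.sum_neg_distrib]
    apply Finset.sum_congr rfl
    intro i hi
    rw [Finset.mem_filter] at hi
    rw [(Nat.odd_iff.mpr (by omega)).neg_one_pow]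
    ring
  have hEO2 : E - O = 0 := by
    rw [← halt, ← Finset.sum_filter_add_sum_filter_not (Finset.range (n+1))
      (fun i => i % 2 = 0) (fun i => ((-1:ℝ))^i * (n.choose i)), h1, h2]
    ring
  interval_cases r
  · show E = 2^n/2
    linarith
  · have : (Finset.range (n+1)).filter (fun i => i % 2 = 1)
        = (Finset.range (n+1)).filter (fun i => ¬ (i % 2 = 0)) := by
      apply Finset.filter_congr
      intro i _
      omega
    rw [this]
    show O = 2^n/2
    linarith

set_option maxHeartbeats 1000000 in
lemma key (n : ℕ) (hn : 0 < n) (r : ℕ) (hr : r < 2) :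
    ∑ i ∈ (Finset.range (n+1)).filter (fun i => i % 2 = r), Real.sqrt (bin n (1/2) i)
      ≤ Real.sqrt (Real.sqrt (2*Real.pi*n)) := by
  have hnR : (0:ℝ) < n := by exact_mod_cast hn
  have hpi := Real.pi_gt_d6
  have hpi' := Real.pi_lt_d6
  have h2pn : (0:ℝ) < 2*Real.pi*n := by positivity
  rcases lt_or_ge (n:ℕ) 97 with hsmall | hbig
  · -- Cauchy-Schwarz branch for n ≤ 96
    set A := (Finset.range (n+1)).filter (fun i => i % 2 = r) with hA
    have hsum_nonneg : 0 ≤ ∑ i ∈ A, Real.sqrt (bin n (1/2) i) :=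
      Finset.sum_nonneg (fun i _ => Real.sqrt_nonneg _)
    have hcard : (A.card : ℝ) ≤ (n:ℝ)/2 + 1 := by
      rw [hA, filter_parity_eq n r hr hn]
      have h1 : ((Finset.range ((n - r)/2 + 1)).image (fun k => 2*k + r)).card
          ≤ (n-r)/2 + 1 := le_of_le_of_eq Finset.card_image_le (Finset.card_range _)
      have h2 : (((n-r)/2 : ℕ) : ℝ) ≤ (n:ℝ)/2 := by
        calc (((n-r)/2 : ℕ) : ℝ) ≤ ((n-r : ℕ):ℝ)/2 := by
              exact_mod_cast Nat.cast_div_le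
          _ ≤ (n:ℝ)/2 := by
              have : ((n-r:ℕ):ℝ) ≤ n := by exact_mod_cast Nat.sub_le n r
              linarith
      have := (Nat.cast_le (α := ℝ)).mpr h1
      push_cast at this
      linarith
    have hsumsq : ∑ i ∈ A, (Real.sqrt (bin n (1/2) i))^2 = 1/2 := by
      have h1 : ∀ i ∈ A, (Real.sqrt (bin n (1/2) i))^2 = (n.choose i : ℝ)/2^n := by
        intro i hi
        rw [hA, Finset.mem_filter, Finset.mem_range] at hi
        rw [Real.sq_sqrt (bin_nonneg n i), bin_eq n i (by omega)]
      rw [Finset.sum_congr rfl h1, ← Finset.sum_div, hA, parity_choose_sum n hn r hr]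
      have : (2:ℝ)^n > 0 := by positivity
      field_simp
    have hcs := sq_sum_le_card_mul_sum_sq (s := A) (f := fun i => Real.sqrt (bin n (1/2) i))
    rw [hsumsq] at hcs
    -- (∑)² ≤ #A * (1/2) ≤ (n/2+1)/2 ≤ √(2πn)
    have hsq2 : (∑ i ∈ A, Real.sqrt (bin n (1/2) i))^2 ≤ ((n:ℝ)/2+1)/2 := by
      calc (∑ i ∈ A, Real.sqrt (bin n (1/2) i))^2 ≤ (A.card : ℝ) * (1/2) := hcs
        _ ≤ ((n:ℝ)/2+1) * (1/2) := by
            apply mul_le_mul_of_nonneg_right hcard (by norm_num)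
        _ = ((n:ℝ)/2+1)/2 := by ring
    have hn96 : (n:ℝ) ≤ 96 := by exact_mod_cast (by omega : n ≤ 96)
    have hn1 : (1:ℝ) ≤ n := by exact_mod_cast hn
    have hmid : ((n:ℝ)/2+1)/2 ≤ Real.sqrt (2*Real.pi*n) := by
      rw [Real.le_sqrt (by positivity) (by positivity)]
      nlinarith [mul_nonneg (sub_nonneg.mpr hn1) (sub_nonneg.mpr hn96)]
    rw [Real.le_sqrt hsum_nonneg (Real.sqrt_nonneg _)]
    linarith
  · -- Gaussian branch for n ≥ 97
    rw [filter_parity_eq n r hr hn,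
      Finset.sum_image (fun x _ y _ h => by omega)]
    set K := (n-r)/2 + 1 with hK
    set m : ℝ := ((n:ℝ) - 2*r)/4 with hm
    set M : ℝ := (n.choose (n/2) : ℝ)/2^n with hM
    have hM_nonneg : 0 ≤ M := by rw [hM]; positivity
    have hterm : ∀ k ∈ Finset.range K, Real.sqrt (bin n (1/2) (2*k+r))
        ≤ Real.sqrt M * Real.exp (1/(8*n)) * Real.exp (-(2/(n:ℝ)) * ((k:ℝ) - m)^2) := by
      intro k hk
      rw [Finset.mem_range] at hk
      have hi : 2*k + r ≤ n := by omega
      have h1 := choose_le_exp n hn (2*k+r) hi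
      have h2 : bin n (1/2) (2*k+r)
          ≤ M * Real.exp ((1 - ((2*(2*k+r) : ℝ) - n)^2) / (4*n)) := by
        rw [bin_eq n _ hi, hM]
        rw [div_mul_eq_mul_div]
        push_cast at h1
        apply div_le_div_of_nonneg_right h1 (by positivity)
      calc Real.sqrt (bin n (1/2) (2*k+r))
          ≤ Real.sqrt (M * Real.exp ((1 - ((2*(2*k+r) : ℝ) - n)^2) / (4*n))) :=
            Real.sqrt_le_sqrt h2
        _ = Real.sqrt M * Real.exp (((1 - ((2*(2*k+r) : ℝ) - n)^2) / (4*n))/2) := by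

            rw [Real.sqrt_mul hM_nonneg, Real.exp_half]
        _ = Real.sqrt M * Real.exp (1/(8*n)) * Real.exp (-(2/(n:ℝ)) * ((k:ℝ) - m)^2) := by
            rw [mul_assoc, ← Real.exp_add]
            congr 1
            rw [hm]
            push_cast
            field_simp
            ring
    have hgauss := gauss_shift n hn m K
    have hsum1 : ∑ k ∈ Finset.range K, Real.sqrt (bin n (1/2) (2*k+r))
        ≤ Real.sqrt M * Real.exp (1/(8*n)) * (2 + Real.sqrt (Real.pi*n/2)) := by
      calc ∑ k ∈ Finset.range K, Real.sqrt (bin n (1/2) (2*k+r))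
          ≤ ∑ k ∈ Finset.range K,
            Real.sqrt M * Real.exp (1/(8*n)) * Real.exp (-(2/(n:ℝ)) * ((k:ℝ) - m)^2) :=
            Finset.sum_le_sum hterm
        _ = Real.sqrt M * Real.exp (1/(8*n))
              * ∑ k ∈ Finset.range K, Real.exp (-(2/(n:ℝ)) * ((k:ℝ) - m)^2) := by
            rw [Finset.mul_sum]
        _ ≤ _ := by
            apply mul_le_mul_of_nonneg_left hgauss (by positivity)
    -- √M ≤ 1/√√n
    have hMle : M ≤ 1/Real.sqrt n := by
      have h4 := (Nat.cast_le (α := ℝ)).mpr (choose_half_sq n hn)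
      push_cast at h4
      have h4n : ((4:ℝ))^n = ((2:ℝ)^n)^2 := by
        rw [← pow_mul, mul_comm, pow_mul]; norm_num
      rw [h4n] at h4
      rw [le_div_iff₀ (by positivity : (0:ℝ) < Real.sqrt n)]
      have hsq : (M * Real.sqrt n)^2 ≤ 1 := by
        have : (M * Real.sqrt n)^2 = M^2 * n := by
          rw [mul_pow, Real.sq_sqrt hnR.le]
        rw [this, hM]
        rw [div_pow]
        rw [div_mul_eq_mul_div, div_le_one (by positivity)]
        nlinarith
      nlinarith [mul_nonneg hM_nonneg (Real.sqrt_nonneg (n:ℝ))]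
    have hsqrtM : Real.sqrt M ≤ 1/Real.sqrt (Real.sqrt n) := by
      calc Real.sqrt M ≤ Real.sqrt (1/Real.sqrt n) := Real.sqrt_le_sqrt hMle
        _ = 1/Real.sqrt (Real.sqrt n) := by
          rw [one_div, one_div, Real.sqrt_inv]
    -- numerics
    have hs97 : (9.84:ℝ) ≤ Real.sqrt n := by
      have : (9.84:ℝ) = Real.sqrt (9.84^2) := by
        rw [Real.sqrt_sq (by norm_num)]
      rw [this]
      apply Real.sqrt_le_sqrt
      have : (97:ℝ) ≤ n := by exact_mod_cast hbig
      nlinarith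
    have hexp : Real.exp (1/(8*n)) ≤ 776/775 := by
      have h1 : (1:ℝ)/(8*n) ≤ 1/776 := by
        rw [div_le_div_iff₀ (by positivity) (by norm_num)]
        have : (97:ℝ) ≤ n := by exact_mod_cast hbig
        linarith
      have h2 : Real.exp (1/(8*n)) ≤ Real.exp (1/776) := Real.exp_le_exp.mpr h1
      have h3 : Real.exp (1/776) ≤ 776/775 := by
        have ha := Real.add_one_le_exp (-(1:ℝ)/776)
        have hb : Real.exp (-(1:ℝ)/776) * Real.exp ((1:ℝ)/776) = 1 := by
          rw [← Real.exp_add]; norm_num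
        nlinarith [Real.exp_pos ((1:ℝ)/776), Real.exp_pos (-(1:ℝ)/776)]
      linarith
    have hsqpi2 : Real.sqrt (Real.pi/2) ≤ 1.2534 := by
      have : Real.pi/2 ≤ (1.2534:ℝ)^2 := by nlinarith
      calc Real.sqrt (Real.pi/2) ≤ Real.sqrt ((1.2534:ℝ)^2) := Real.sqrt_le_sqrt this
        _ = 1.2534 := Real.sqrt_sq (by norm_num)
    have hsq2pi : (1.5832:ℝ) ≤ Real.sqrt (Real.sqrt (2*Real.pi)) := by
      have h1 : (2.5066:ℝ) ≤ Real.sqrt (2*Real.pi) := by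
        have h0 : ((2.5066:ℝ))^2 ≤ 2*Real.pi := by nlinarith
        calc (2.5066:ℝ) = Real.sqrt ((2.5066:ℝ)^2) := (Real.sqrt_sq (by norm_num)).symm
          _ ≤ Real.sqrt (2*Real.pi) := Real.sqrt_le_sqrt h0
      calc (1.5832:ℝ) = Real.sqrt ((1.5832:ℝ)^2) := (Real.sqrt_sq (by norm_num)).symm
        _ ≤ Real.sqrt (2.5066:ℝ) := Real.sqrt_le_sqrt (by norm_num)
        _ ≤ Real.sqrt (Real.sqrt (2*Real.pi)) := Real.sqrt_le_sqrt h1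
    -- split √(πn/2) = √(π/2)·√n and target
    have hsplit1 : Real.sqrt (Real.pi*n/2) = Real.sqrt (Real.pi/2) * Real.sqrt n := by
      rw [← Real.sqrt_mul (by positivity)]
      congr 1; ring
    have htarget : Real.sqrt (Real.sqrt (2*Real.pi*n))
        = Real.sqrt (Real.sqrt (2*Real.pi)) * Real.sqrt (Real.sqrt n) := by
      rw [← Real.sqrt_mul (Real.sqrt_nonneg _), ← Real.sqrt_mul (by positivity)]
    have hssn : (0:ℝ) < Real.sqrt (Real.sqrt n) := by
      apply Real.sqrt_pos.mpr
      apply Real.sqrt_pos.mpr hnR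
    -- final: √M·e·(2+√(πn/2)) ≤ √√(2π)·√√n
    have hfinal : Real.sqrt M * Real.exp (1/(8*n)) * (2 + Real.sqrt (Real.pi*n/2))
        ≤ Real.sqrt (Real.sqrt (2*Real.pi)) * Real.sqrt (Real.sqrt n) := by
      have hstep : Real.exp (1/(8*n)) * (2 + Real.sqrt (Real.pi*n/2))
          ≤ Real.sqrt (Real.sqrt (2*Real.pi)) * Real.sqrt n := by
        rw [hsplit1]
        have hb1 : Real.exp (1/(8*n)) * (2 + Real.sqrt (Real.pi/2) * Real.sqrt n)
            ≤ (776/775) * (2 + 1.2534 * Real.sqrt n) := by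
          apply mul_le_mul hexp _ (by positivity) (by norm_num)
          have := Real.sqrt_nonneg (n:ℝ)
          nlinarith
        have hb2 : (776/775 : ℝ) * (2 + 1.2534 * Real.sqrt n)
            ≤ 1.5832 * Real.sqrt n := by nlinarith
        have hb3 : (1.5832:ℝ) * Real.sqrt n
            ≤ Real.sqrt (Real.sqrt (2*Real.pi)) * Real.sqrt n :=
          mul_le_mul_of_nonneg_right hsq2pi (Real.sqrt_nonneg _)
        linarith
      calc Real.sqrt M * Real.exp (1/(8*n)) * (2 + Real.sqrt (Real.pi*n/2))
          ≤ (1/Real.sqrt (Real.sqrt n)) * (Real.exp (1/(8*n)) * (2 + Real.sqrt (Real.pi*n/2))) := by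
            rw [mul_assoc]
            apply mul_le_mul_of_nonneg_right hsqrtM (by positivity)
        _ ≤ (1/Real.sqrt (Real.sqrt n)) * (Real.sqrt (Real.sqrt (2*Real.pi)) * Real.sqrt n) := by
            apply mul_le_mul_of_nonneg_left hstep (by positivity)
        _ = Real.sqrt (Real.sqrt (2*Real.pi)) * (Real.sqrt n / Real.sqrt (Real.sqrt n)) := by
            ring
        _ = Real.sqrt (Real.sqrt (2*Real.pi)) * Real.sqrt (Real.sqrt n) := by
            congr 1
            rw [eq_comm, eq_div_iff (ne_of_gt hssn), Real.mul_self_sqrt (Real.sqrt_nonneg _)]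
    rw [htarget]
    linarith

lemma sqrt_prod_of_nonneg {ι : Type*} (s : Finset ι) (f : ι → ℝ) (h : ∀ i ∈ s, 0 ≤ f i) :
    Real.sqrt (∏ i ∈ s, f i) = ∏ i ∈ s, Real.sqrt (f i) := by
  induction s using Finset.cons_induction with
  | empty => simp
  | cons a s ha ih =>
    rw [Finset.prod_cons, Finset.prod_cons,
      Real.sqrt_mul (h a (Finset.mem_cons_self a s)),
      ih (fun i hi => h i (Finset.mem_cons.mpr (Or.inr hi)))]

lemma main_aux (n : ℕ) (hn : 0 < n) (α : ℝ) (hα : 0 < α)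
    (hle : ∀ i : ℕ, i ≤ n → α * bin n (1/2) i ≤ 1) (r : ℕ) (hr : r < 2)
    (S : Fin (n+1) → ℝ)
    (hS : ∀ i : Fin (n+1), S i = if i.val % 2 = r then α * bin n (1/2) i.val else 0) :
    ∑ x : Fin (n+1) → Bool, Real.sqrt (prodP S x)
      ≤ Real.exp (Real.sqrt α * (2*Real.pi*n) ^ ((1:ℝ)/4)) := by
  have hS0 : ∀ i, 0 ≤ S i := by
    intro i
    rw [hS]
    split
    · exact mul_nonneg hα.le (bin_nonneg n _)
    · exact le_rfl
  have hS1 : ∀ i, S i ≤ 1 := by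
    intro i
    rw [hS]
    split
    · exact hle i.val (by omega)
    · norm_num
  have hfac : ∀ x : Fin (n+1) → Bool,
      Real.sqrt (prodP S x) = ∏ i, Real.sqrt (if x i then S i else 1 - S i) := by
    intro x
    unfold prodP
    apply sqrt_prod_of_nonneg
    intro i _
    split
    · exact hS0 i
    · linarith [hS1 i]
  rw [Finset.sum_congr rfl (fun x _ => hfac x)]
  rw [← Fintype.prod_sum (fun (i : Fin (n+1)) (b : Bool) =>
    Real.sqrt (if b then S i else 1 - S i))]
  have hsum_bound : ∑ i : Fin (n+1), Real.sqrt (S i)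
      ≤ Real.sqrt α * (2*Real.pi*n) ^ ((1:ℝ)/4) := by
    have hrpow : (2*Real.pi*(n:ℝ)) ^ ((1:ℝ)/4) = Real.sqrt (Real.sqrt (2*Real.pi*n)) := by
      rw [show ((1:ℝ)/4) = (1/2)*(1/2) by norm_num, Real.rpow_mul (by positivity),
        ← Real.sqrt_eq_rpow, ← Real.sqrt_eq_rpow]
    have h1 : ∑ i : Fin (n+1), Real.sqrt (S i)
        = ∑ i ∈ Finset.range (n+1),
            Real.sqrt (if i % 2 = r then α * bin n (1/2) i else 0) := by
      rw [Finset.sum_congr rfl (fun i _ => by rw [hS i])]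
      exact Fin.sum_univ_eq_sum_range
        (fun i => Real.sqrt (if i % 2 = r then α * bin n (1/2) i else 0)) (n+1)
    have h2 : ∑ i ∈ Finset.range (n+1),
          Real.sqrt (if i % 2 = r then α * bin n (1/2) i else 0)
        = ∑ i ∈ (Finset.range (n+1)).filter (fun i => i % 2 = r),
            Real.sqrt (α * bin n (1/2) i) := by
      rw [Finset.sum_filter]
      apply Finset.sum_congr rfl
      intro i _
      split <;> simp
    have h3 : ∑ i ∈ (Finset.range (n+1)).filter (fun i => i % 2 = r),
          Real.sqrt (α * bin n (1/2) i)
        = Real.sqrt α * ∑ i ∈ (Finset.range (n+1)).filter (fun i => i % 2 = r),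
            Real.sqrt (bin n (1/2) i) := by
      rw [Finset.mul_sum]
      exact Finset.sum_congr rfl (fun i _ => Real.sqrt_mul hα.le _)
    rw [h1, h2, h3, hrpow]
    exact mul_le_mul_of_nonneg_left (key n hn r hr) (Real.sqrt_nonneg _)
  calc ∏ i : Fin (n+1), (∑ b : Bool, Real.sqrt (if b then S i else 1 - S i))
      ≤ ∏ i : Fin (n+1), Real.exp (Real.sqrt (S i)) := by
        apply Finset.prod_le_prod
        · intro i _
          apply Finset.sum_nonneg
          intro b _
          exact Real.sqrt_nonneg _
        · intro i _
          rw [Fintype.sum_bool]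
          have hif1 : (if true = true then S i else 1 - S i) = S i := by norm_num
          have hif2 : (if false = true then S i else 1 - S i) = 1 - S i := by norm_num
          rw [hif1, hif2]
          have hle1 : Real.sqrt (1 - S i) ≤ 1 := by
            have h := Real.sqrt_le_sqrt (show 1 - S i ≤ 1 by linarith [hS0 i])
            simpa using h
          have := Real.add_one_le_exp (Real.sqrt (S i))
          linarith
    _ = Real.exp (∑ i : Fin (n+1), Real.sqrt (S i)) := (Real.exp_sum _ _).symm
    _ ≤ _ := Real.exp_le_exp.mpr hsum_bound

/-- If `α bin(n,1/2,i) ≤ 1` for all `i`, then the sum over all `x ∈ {0,1}^{n+1}` of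
the square roots of the probabilities of the product distribution induced by `S_e`
is at most `e^{√α (2πn)^{1/4}}`; by symmetry the same holds for `S_o`. -/
theorem sum_sqrt_prob_bound (n : ℕ) (hn : 0 < n) (α : ℝ) (hα : 0 < α)
    (hle : ∀ i : ℕ, i ≤ n → α * bin n (1/2) i ≤ 1) :
    (∑ x : Fin (n+1) → Bool, Real.sqrt (prodP (Se n α) x))
        ≤ Real.exp (Real.sqrt α * (2 * Real.pi * n) ^ ((1:ℝ)/4)) ∧
    (∑ x : Fin (n+1) → Bool, Real.sqrt (prodP (So n α) x))
        ≤ Real.exp (Real.sqrt α * (2 * Real.pi * n) ^ ((1:ℝ)/4)) := by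
  constructor
  · apply main_aux n hn α hα hle 0 (by norm_num)
    intro i
    unfold Se
    by_cases h : Even i.val
    · rw [if_pos h, if_pos (Nat.even_iff.mp h)]
    · rw [if_neg h, if_neg (fun hc => h (Nat.even_iff.mpr hc))]
  · apply main_aux n hn α hα hle 1 (by norm_num)
    intro i
    unfold So
    by_cases h : Even i.val
    · rw [if_pos h, if_neg (by rw [Nat.even_iff] at h; omega)]
    · rw [if_neg h, if_pos (by rw [Nat.even_iff] at h; omega)]
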